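/- If A and B are subsets of a group G having bounded rectangles, then A ∪ B has bounded rectangles; hence BR_G is closed under finite unions. (Proof uses the bipartite Ramsey theorem.) -/

import Mathlib

open Pointwise

/-- `A` has *bounded rectangles* if for some `n` it contains no `(n,n)`-rectangle. -/
def HasBoundedRectangles {G : Type*} [Group G] (A : Set G) : Prop :=
  ∃ n : ℕ, ¬ ∃ X Y : Finset G, X.card = n ∧ Y.card = n ∧
    (X : Set G) * (Y : Set G) ⊆ A

/-- From big sets with product in `A`, extract an exact `(m,m)`-rectangle. -/
lemma br_shrink {G : Type*} [Group G] {A : Set G} {m : ℕ} {X Y : Finset G}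
    (hX : m ≤ X.card) (hY : m ≤ Y.card)
    (h : (X : Set G) * (Y : Set G) ⊆ A) :
    ∃ X' Y' : Finset G, X'.card = m ∧ Y'.card = m ∧
      (X' : Set G) * (Y' : Set G) ⊆ A := by
  obtain ⟨X', hX'sub, hX'⟩ := Finset.exists_subset_card_eq hX
  obtain ⟨Y', hY'sub, hY'⟩ := Finset.exists_subset_card_eq hY
  refine ⟨X', Y', hX', hY', ?_⟩
  refine Set.Subset.trans ?_ h
  exact Set.mul_subset_mul (by exact_mod_cast hX'sub) (by exact_mod_cast hY'sub)

/-- If `A` and `B` have bounded rectangles then so does `A ∪ B`. -/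
theorem br_union {G : Type*} [Group G] (A B : Set G)
    (hA : HasBoundedRectangles A) (hB : HasBoundedRectangles B) :
    HasBoundedRectangles (A ∪ B) := by
  classical
  obtain ⟨a, ha⟩ := hA
  obtain ⟨b, hb⟩ := hB
  set n : ℕ := max a b + 1 with hn
  have han : a ≤ n := le_trans (le_max_left a b) (Nat.le_succ _)
  have hbn : b ≤ n := le_trans (le_max_right a b) (Nat.le_succ _)
  have hn1 : 1 ≤ n := Nat.succ_le_succ (Nat.zero_le _)
  refine ⟨n * 2 ^ (2 * n), ?_⟩
  rintro ⟨X, Y, hX, hY, hXY⟩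
  -- pick a row set of size 2n
  have h2n : 2 * n ≤ X.card := by
    rw [hX]
    calc 2 * n = n * 2 := by ring
    _ ≤ n * 2 ^ (2 * n) := by
      apply Nat.mul_le_mul_left
      calc 2 = 2 ^ 1 := rfl
      _ ≤ 2 ^ (2 * n) := Nat.pow_le_pow_right (by norm_num) (by omega)
  obtain ⟨X₀, hX₀sub, hX₀⟩ := Finset.exists_subset_card_eq h2n
  -- each column y gets a pattern: the set of x in X₀ with x*y ∈ A
  set f : G → Finset G := fun y => X₀.filter (fun x => x * y ∈ A) with hf
  have hmaps : ∀ y ∈ Y, f y ∈ X₀.powerset := by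
    intro y _
    simp [hf, Finset.mem_powerset]
  have hcard : X₀.powerset.card * (n - 1) < Y.card := by
    rw [Finset.card_powerset, hX₀, hY]
    have : n - 1 < n := by omega
    have hp : (0:ℕ) < 2 ^ (2 * n) := Nat.pow_pos (by norm_num)
    have h1 : 2 ^ (2 * n) * (n - 1) < 2 ^ (2 * n) * n := mul_lt_mul_of_pos_left this hp
    rw [mul_comm n (2 ^ (2 * n))]
    exact h1
  obtain ⟨S, hSmem, hSfib⟩ :=
    Finset.exists_lt_card_fiber_of_mul_lt_card_of_maps_to hmaps hcard
  set Y₀ : Finset G := Y.filter (fun y => f y = S) with hY₀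
  have hY₀n : n ≤ Y₀.card := by omega
  have hY₀Y : Y₀ ⊆ Y := Finset.filter_subset _ _
  have hSsub : S ⊆ X₀ := Finset.mem_powerset.mp hSmem
  -- either S is big (all-A rectangle) or its complement in X₀ is big (all-B)
  have hsplit : n ≤ S.card ∨ n ≤ (X₀ \ S).card := by
    have := Finset.card_sdiff_of_subset hSsub
    have hSle : S.card ≤ X₀.card := Finset.card_le_card hSsub
    omega
  rcases hsplit with hbig | hbig
  · -- rectangle in A
    apply ha
    have hprod : (S : Set G) * (Y₀ : Set G) ⊆ A := by
      rintro z ⟨x, hx, y, hy, rfl⟩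
      have hy' := Finset.mem_filter.mp hy
      have : x ∈ f y := hy'.2 ▸ hx
      exact (Finset.mem_filter.mp this).2
    exact br_shrink (le_trans han hbig) (le_trans han hY₀n) hprod
  · -- rectangle in B
    apply hb
    have hprod : ((X₀ \ S : Finset G) : Set G) * (Y₀ : Set G) ⊆ B := by
      rintro z ⟨x, hx, y, hy, rfl⟩
      have hx' := Finset.mem_sdiff.mp hx
      have hy' := Finset.mem_filter.mp hy
      have hxX : x ∈ X := hX₀sub hx'.1
      have hyY : y ∈ Y := hy'.1
      have hmem : x * y ∈ A ∪ B := hXY ⟨x, by exact_mod_cast hxX, y, by exact_mod_cast hyY, rfl⟩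
      rcases hmem with hmem | hmem
      · exfalso
        apply hx'.2
        rw [← hy'.2]
        exact Finset.mem_filter.mpr ⟨hx'.1, hmem⟩
      · exact hmem
    exact br_shrink (le_trans hbn hbig) (le_trans hbn hY₀n) hprod
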